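/- Let p ∈ (1,2) and set κ := (p-1)^{-p}. For a > 0 let ψ(·,a) be the function associated with the unique solution f(·,a) of (|f'|^{p-2} f')' + f - |f'|^{p-1} = 0, f(0) = a, f'(0) = 0, via ψ(1-f(r,a)/a, a) = |f'(r,a)|^p/a^p, and let ℓ(a) := lim_{y→1} ψ(y,a). Then ℓ(a) > 0 if and only if sup_{y ∈ [0,1)} { ψ(y,a)(1-y)^{-p} } > κ. -/

import Mathlib

open Set Filter Topology

/-- The extinction "radius" `R = inf{r > 0 : f(r) = 0}`, as an extended real number
(`⊤` when `f` does not vanish on `(0,∞)`). -/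
noncomputable def extTime (f : ℝ → ℝ) : EReal :=
  sInf {x : EReal | ∃ r : ℝ, 0 < r ∧ f r = 0 ∧ x = (r : EReal)}

/-- `f` solves `(|f'|^{p-2} f')' + f - |f'|^{p-1} = 0` on `(0,∞)` with `f(0)=a`, `f'(0)=0`;
`fd` is the derivative of `f` and `gd` the derivative of `|f'|^{p-2} f'`, both continuous
on `[0,∞)`, so that `f ∈ C¹([0,∞))` and `|f'|^{p-2} f' ∈ C¹([0,∞))`. -/
def IsSol (p a : ℝ) (f fd gd : ℝ → ℝ) : Prop :=
  (∀ r ∈ Set.Ici (0:ℝ), HasDerivWithinAt f (fd r) (Set.Ici 0) r) ∧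
  ContinuousOn fd (Set.Ici 0) ∧
  (∀ r ∈ Set.Ici (0:ℝ), HasDerivWithinAt (fun s => |fd s| ^ (p-2) * fd s) (gd r) (Set.Ici 0) r) ∧
  ContinuousOn gd (Set.Ici 0) ∧
  (∀ r ∈ Set.Ioi (0:ℝ), gd r + f r - |fd r| ^ (p-1) = 0) ∧
  f 0 = a ∧ fd 0 = 0

/-- `ψ` is the function associated with `f = f(·,a)` via `ψ(1 - f(r)/a) = |f'(r)|^p/a^p`
for `r ∈ [0,R(a))`. -/
def PsiRel (p a : ℝ) (f fd ψ : ℝ → ℝ) : Prop :=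
  ∀ r : ℝ, 0 ≤ r → (r : EReal) < extTime f → ψ (1 - f r / a) = |fd r| ^ p / a ^ p

namespace Stmt9Aux

variable {p a : ℝ} {f fd gd : ℝ → ℝ}

lemma fCont (hf : IsSol p a f fd gd) : ContinuousOn f (Ici 0) :=
  fun r hr => (hf.1 r hr).continuousWithinAt

lemma gCont (hf : IsSol p a f fd gd) :
    ContinuousOn (fun s => |fd s| ^ (p-2) * fd s) (Ici 0) :=
  fun r hr => (hf.2.2.1 r hr).continuousWithinAt

lemma ode (hf : IsSol p a f fd gd) {r : ℝ} (hr : 0 < r) :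
    gd r = |fd r| ^ (p-1) - f r := by
  have := hf.2.2.2.2.1 r hr; linarith

lemma g_zero (hf : IsSol p a f fd gd) : |fd 0| ^ (p-2) * fd 0 = 0 := by
  rw [hf.2.2.2.2.2.2, mul_zero]

lemma gd_zero (hp : p ∈ Set.Ioo (1:ℝ) 2) (hf : IsSol p a f fd gd) : gd 0 = -a := by
  have h1 : Tendsto gd (𝓝[>] (0:ℝ)) (𝓝 (gd 0)) :=
    (hf.2.2.2.1 0 (mem_Ici.2 le_rfl)).mono (Ioi_subset_Ici le_rfl)
  have habs : Tendsto (fun r => |fd r|) (𝓝[>] (0:ℝ)) (𝓝 0) := by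
    have h : Tendsto fd (𝓝[>] (0:ℝ)) (𝓝 (fd 0)) :=
      (hf.2.1 0 (mem_Ici.2 le_rfl)).mono (Ioi_subset_Ici le_rfl)
    rw [hf.2.2.2.2.2.2] at h
    simpa using h.abs
  have hpow : Tendsto (fun r => |fd r| ^ (p-1)) (𝓝[>] (0:ℝ)) (𝓝 0) := by
    have hc : ContinuousAt (fun x : ℝ => x ^ (p-1)) 0 :=
      Real.continuousAt_rpow_const 0 (p-1) (Or.inr (by linarith [hp.1]))
    have := hc.tendsto.comp habs
    simpa [Function.comp_def, Real.zero_rpow (by linarith [hp.1] : p - 1 ≠ 0)] using this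
  have hft : Tendsto f (𝓝[>] (0:ℝ)) (𝓝 a) := by
    have h : Tendsto f (𝓝[>] (0:ℝ)) (𝓝 (f 0)) :=
      (fCont hf 0 (mem_Ici.2 le_rfl)).mono (Ioi_subset_Ici le_rfl)
    rwa [hf.2.2.2.2.2.1] at h
  have h2 : Tendsto gd (𝓝[>] (0:ℝ)) (𝓝 (0 - a)) := by
    apply Tendsto.congr' _ (hpow.sub hft)
    filter_upwards [self_mem_nhdsWithin] with r hr
    exact (ode hf hr).symm
  have := tendsto_nhds_unique h1 h2
  rw [this]; ring

/-- g is negative for small positive times. -/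
lemma g_small (hp : p ∈ Set.Ioo (1:ℝ) 2) (ha : 0 < a) (hf : IsSol p a f fd gd) :
    ∃ ε > 0, ∀ s, 0 < s → s ≤ ε → |fd s| ^ (p-2) * fd s < 0 := by
  set g : ℝ → ℝ := fun s => |fd s| ^ (p-2) * fd s with hg
  have hg0 : g 0 = 0 := g_zero hf
  have hd : HasDerivWithinAt g (gd 0) (Ici 0) 0 := hf.2.2.1 0 (mem_Ici.2 le_rfl)
  have hslope : Tendsto (slope g 0) (𝓝[>] (0:ℝ)) (𝓝 (-a)) := by
    have := hasDerivWithinAt_iff_tendsto_slope.1 hd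
    rw [gd_zero hp hf] at this
    apply this.mono_left
    apply nhdsWithin_mono
    intro x hx
    exact ⟨mem_Ici.2 (le_of_lt (mem_Ioi.1 hx)), ne_of_gt hx⟩
  have hev : ∀ᶠ s in 𝓝[>] (0:ℝ), slope g 0 s < 0 :=
    hslope.eventually_lt_const (by linarith)
  rw [eventually_iff, mem_nhdsGT_iff_exists_Ioc_subset] at hev
  obtain ⟨u, hu, hsub⟩ := hev
  refine ⟨u, hu, fun s hs hsu => ?_⟩
  have h2 := hsub ⟨hs, hsu⟩
  rw [mem_setOf_eq, slope_def_field, hg0] at h2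
  show g s < 0
  have h3 : g s / s < 0 := by simpa using h2
  by_contra h
  push_neg at h
  exact absurd (div_nonneg h hs.le) (not_le.2 h3)

lemma fd_neg (hp : p ∈ Set.Ioo (1:ℝ) 2) (ha : 0 < a) (hf : IsSol p a f fd gd)
    {r : ℝ} (hfp : ∀ s, 0 ≤ s → s ≤ r → 0 < f s) :
    ∀ s, 0 < s → s ≤ r → fd s < 0 := by
  set g : ℝ → ℝ := fun s => |fd s| ^ (p-2) * fd s with hgdef
  suffices hgneg : ∀ s, 0 < s → s ≤ r → g s < 0 by
    intro s hs hsr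
    by_contra h
    push_neg at h
    have : 0 ≤ g s := mul_nonneg (Real.rpow_nonneg (abs_nonneg _) _) h
    exact absurd this (not_le.2 (hgneg s hs hsr))
  by_contra hcon
  push_neg at hcon
  obtain ⟨sb, hsb0, hsbr, hsbg⟩ := hcon
  obtain ⟨ε, hε, hsmall⟩ := g_small hp ha hf
  have hεsb : ε < sb := by
    by_contra h
    push_neg at h
    exact absurd (hsmall sb hsb0 h) (not_lt.2 hsbg)
  set B : Set ℝ := {s | s ∈ Icc ε r ∧ 0 ≤ g s} with hB
  have hBne : B.Nonempty := ⟨sb, ⟨hεsb.le, hsbr⟩, hsbg⟩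
  have hBclosed : IsClosed B := by
    have : B = Icc ε r ∩ g ⁻¹' (Ici 0) := rfl
    rw [this]
    exact ContinuousOn.preimage_isClosed_of_isClosed
      ((gCont hf).mono (fun x hx => le_trans hε.le hx.1)) isClosed_Icc isClosed_Ici
  have hBcomp : IsCompact B :=
    (isCompact_Icc (a := ε) (b := r)).of_isClosed_subset hBclosed (fun x hx => hx.1)
  set s1 : ℝ := sInf B with hs1
  have hs1B : s1 ∈ B := hBcomp.sInf_mem hBne
  have hs1pos : 0 < s1 := lt_of_lt_of_le hε hs1B.1.1
  have hs1r : s1 ≤ r := hs1B.1.2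
  have hbefore : ∀ t, 0 < t → t < s1 → g t < 0 := by
    intro t ht hts1
    rcases le_or_gt t ε with h | h
    · exact hsmall t ht h
    · by_contra hcontra
      push_neg at hcontra
      have : t ∈ B := ⟨⟨h.le, le_trans hts1.le hs1r⟩, hcontra⟩
      exact absurd (csInf_le hBcomp.bddBelow this) (not_le.2 hts1)
  have hgs1le : g s1 ≤ 0 := by
    have hcont : ContinuousAt g s1 :=
      (gCont hf s1 (mem_Ici.2 hs1pos.le)).continuousAt (Ici_mem_nhds hs1pos)
    have htend : Tendsto g (𝓝[<] s1) (𝓝 (g s1)) := hcont.continuousWithinAt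
    apply le_of_tendsto htend
    filter_upwards [Ioo_mem_nhdsLT_of_mem (⟨hs1pos, le_rfl⟩ : s1 ∈ Ioc 0 s1)] with t ht
    exact (hbefore t ht.1 ht.2).le
  have hgs1 : g s1 = 0 := le_antisymm hgs1le hs1B.2
  have hfds1 : fd s1 = 0 := by
    rcases mul_eq_zero.1 hgs1 with h | h
    · by_contra hne
      have : 0 < |fd s1| ^ (p-2) := Real.rpow_pos_of_pos (abs_pos.2 hne) _
      exact absurd h (ne_of_gt this)
    · exact h
  have hgds1 : gd s1 = -f s1 := by
    rw [ode hf hs1pos, hfds1]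
    simp [Real.zero_rpow (by linarith [hp.1] : p - 1 ≠ 0)]
  have hgds1neg : gd s1 < 0 := by
    rw [hgds1]
    have := hfp s1 hs1pos.le hs1r
    linarith
  have hder : HasDerivAt g (gd s1) s1 :=
    (hf.2.2.1 s1 (mem_Ici.2 hs1pos.le)).hasDerivAt (Ici_mem_nhds hs1pos)
  have hslope : Tendsto (slope g s1) (𝓝[<] s1) (𝓝 (gd s1)) := by
    have := hasDerivAt_iff_tendsto_slope.1 hder
    exact this.mono_left (nhdsWithin_mono _ (fun x hx => ne_of_lt hx))
  have : 0 ≤ gd s1 := by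
    apply ge_of_tendsto hslope
    filter_upwards [Ioo_mem_nhdsLT_of_mem (⟨hs1pos, le_rfl⟩ : s1 ∈ Ioc 0 s1)] with t ht
    rw [slope_def_field, hgs1]
    have h1 : g t < 0 := hbefore t ht.1 ht.2
    have h2 : t - s1 < 0 := by linarith [ht.2]
    exact le_of_lt (div_pos_of_neg_of_neg (by linarith) h2)
  exact absurd hgds1neg (not_lt.2 this)

lemma G_deriv (hp : p ∈ Set.Ioo (1:ℝ) 2) (hf : IsSol p a f fd gd)
    {s : ℝ} (hs : 0 < s) (hfds : fd s < 0) :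
    HasDerivAt (fun t => |fd t| - f t / (p-1)) (f s * (-fd s) ^ (2-p) / (p-1)) s := by
  obtain ⟨hp1, hp2⟩ := hp
  have hp1' : (0:ℝ) < p - 1 := by linarith
  have hIci : Ici (0:ℝ) ∈ 𝓝 s := Ici_mem_nhds hs
  set g : ℝ → ℝ := fun t => |fd t| ^ (p-2) * fd t with hgdef
  have hgd : HasDerivAt g (gd s) s := (hf.2.2.1 s (mem_Ici.2 hs.le)).hasDerivAt hIci
  have hfdc : ContinuousAt fd s := (hf.2.1 s (mem_Ici.2 hs.le)).continuousAt hIci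
  have hev : ∀ᶠ t in 𝓝 s, fd t < 0 := hfdc.preimage_mem_nhds (Iio_mem_nhds hfds)
  have hid : ∀ t : ℝ, fd t < 0 → -(g t) = (-fd t) ^ (p-1) := by
    intro t ht
    have habs : |fd t| = -fd t := abs_of_neg ht
    have hpos : (0:ℝ) < -fd t := by linarith
    have : (-fd t) ^ (p-1) = (-fd t) ^ (p-2) * (-fd t) := by
      rw [← Real.rpow_add_one (ne_of_gt hpos)]
      ring_nf
    rw [this, hgdef]
    simp only [habs]
    ring
  set X : ℝ := -fd s with hX
  have hXpos : 0 < X := by simp [hX]; linarith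
  have hgs : -(g s) = X ^ (p-1) := hid s hfds
  have hgneg : HasDerivAt (fun t => -(g t)) (-gd s) s := hgd.neg
  have hrpow : HasDerivAt (fun t => (-(g t)) ^ ((p-1)⁻¹))
      ((-gd s) * (p-1)⁻¹ * (-(g s)) ^ ((p-1)⁻¹ - 1)) s := by
    apply HasDerivAt.rpow_const hgneg
    left
    rw [hgs]
    exact ne_of_gt (Real.rpow_pos_of_pos hXpos _)
  have heq : (fun t => |fd t|) =ᶠ[𝓝 s] (fun t => (-(g t)) ^ ((p-1)⁻¹)) := by
    filter_upwards [hev] with t ht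
    rw [hid t ht, Real.rpow_rpow_inv (by linarith : (0:ℝ) ≤ -fd t)
      (ne_of_gt (by linarith : (0:ℝ) < p - 1)), abs_of_neg ht]
  have habs : HasDerivAt (fun t => |fd t|)
      ((-gd s) * (p-1)⁻¹ * (-(g s)) ^ ((p-1)⁻¹ - 1)) s :=
    hrpow.congr_of_eventuallyEq heq
  have hfder : HasDerivAt f (fd s) s := (hf.1 s (mem_Ici.2 hs.le)).hasDerivAt hIci
  have htot : HasDerivAt (fun t => |fd t| - f t / (p-1))
      ((-gd s) * (p-1)⁻¹ * (-(g s)) ^ ((p-1)⁻¹ - 1) - fd s / (p-1)) s :=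
    habs.sub (hfder.div_const _)
  convert htot using 1
  have h1 : (-(g s)) ^ ((p-1)⁻¹ - 1) = X ^ (2 - p) := by
    rw [hgs, ← Real.rpow_mul hXpos.le]
    congr 1
    field_simp
    ring
  have h2 : -gd s = f s - X ^ (p-1) := by
    rw [ode hf hs, abs_of_neg hfds]
    rw [← hX]; ring
  rw [h1, h2]
  have h3 : X ^ (p-1) * X ^ (2-p) = X := by
    rw [← Real.rpow_add hXpos, show p - 1 + (2 - p) = 1 by ring, Real.rpow_one]
  have h4 : fd s = -X := by simp [hX]
  rw [h4]
  field_simp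
  nlinarith [h3]

lemma G_mono (hp : p ∈ Set.Ioo (1:ℝ) 2) (ha : 0 < a) (hf : IsSol p a f fd gd)
    {r0 r1 : ℝ} (h0 : 0 ≤ r0) (h01 : r0 < r1) (hfp : ∀ s, 0 ≤ s → s ≤ r1 → 0 < f s) :
    |fd r0| - f r0 / (p-1) < |fd r1| - f r1 / (p-1) := by
  have hsub : Icc r0 r1 ⊆ Ici (0:ℝ) := fun x hx => le_trans h0 hx.1
  have hcont : ContinuousOn (fun t => |fd t| - f t / (p-1)) (Icc r0 r1) := by
    apply ContinuousOn.sub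
    · exact ((hf.2.1).mono hsub).abs
    · exact ((fCont hf).mono hsub).div_const _
  have hderiv : ∀ x ∈ interior (Icc r0 r1), 0 < deriv (fun t => |fd t| - f t / (p-1)) x := by
    rw [interior_Icc]
    intro x hx
    have hx0 : 0 < x := lt_of_le_of_lt h0 hx.1
    have hfdx : fd x < 0 := fd_neg hp ha hf hfp x hx0 hx.2.le
    have hfx : 0 < f x := hfp x hx0.le hx.2.le
    rw [(G_deriv hp hf hx0 hfdx).deriv]
    have h1 : (0:ℝ) < (-fd x) ^ (2-p) := Real.rpow_pos_of_pos (by linarith) _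
    have hp1' : (0:ℝ) < p - 1 := by linarith [hp.1]
    positivity
  exact strictMonoOn_of_deriv_pos (convex_Icc r0 r1) hcont hderiv
    (left_mem_Icc.2 h01.le) (right_mem_Icc.2 h01.le) h01

lemma decay (hp : p ∈ Set.Ioo (1:ℝ) 2) (ha : 0 < a) (hf : IsSol p a f fd gd)
    (hfpos : ∀ s, 0 ≤ s → 0 < f s) : Tendsto f atTop (𝓝 0) := by
  have hp1' : (0:ℝ) < p - 1 := by linarith [hp.1]
  set g : ℝ → ℝ := fun s => |fd s| ^ (p-2) * fd s with hgdef
  have hfd : ∀ s, 0 < s → fd s < 0 := fun s hs =>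
    fd_neg hp ha hf (fun t ht _ => hfpos t ht) s hs le_rfl
  have hgid : ∀ s, 0 < s → -(g s) = |fd s| ^ (p-1) := by
    intro s hs
    have h1 : |fd s| = -fd s := abs_of_neg (hfd s hs)
    have h2 : 0 < |fd s| := by rw [h1]; linarith [hfd s hs]
    have h3 : |fd s| ^ (p-2) * |fd s| = |fd s| ^ (p-1) := by
      rw [← Real.rpow_add_one (ne_of_gt h2) (p-2)]
      ring_nf
    calc -(g s) = |fd s| ^ (p-2) * (-fd s) := by rw [hgdef]; ring
      _ = |fd s| ^ (p-2) * |fd s| := by rw [← h1]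
      _ = |fd s| ^ (p-1) := h3
  have hgd_eq : ∀ s, 0 < s → gd s = -(g s) - f s := by
    intro s hs
    rw [ode hf hs, hgid s hs]
  have hderg : ∀ x : ℝ, 0 < x → HasDerivAt g (gd x) x := fun x hx =>
    (hf.2.2.1 x (mem_Ici.2 hx.le)).hasDerivAt (Ici_mem_nhds hx)
  have hderf : ∀ x : ℝ, 0 < x → HasDerivAt f (fd x) x := fun x hx =>
    (hf.1 x (mem_Ici.2 hx.le)).hasDerivAt (Ici_mem_nhds hx)
  have claim : ∀ ε : ℝ, 0 < ε → ∃ r, 0 ≤ r ∧ f r < ε := by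
    intro ε hε
    by_contra hcon
    push_neg at hcon
    have step1 : ∃ s0, 1 ≤ s0 ∧ g s0 ≤ -(ε/2) := by
      by_contra h1
      push_neg at h1
      set T : ℝ := max 1 (2 * g 1 / ε + 2) with hT
      have hT1 : 1 ≤ T := le_max_left _ _
      have hanti : AntitoneOn (fun t => g t + ε/2 * t) (Icc 1 T) := by
        apply antitoneOn_of_deriv_nonpos (convex_Icc 1 T)
        · apply ContinuousOn.add
          · exact (gCont hf).mono (fun x hx => le_trans zero_le_one hx.1)
          · exact (continuous_const.mul continuous_id).continuousOn
        · intro x hx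
          rw [interior_Icc] at hx
          have hx0 : (0:ℝ) < x := lt_trans zero_lt_one hx.1
          have hlin : HasDerivAt (fun t : ℝ => ε/2 * t) (ε/2) x := by
            simpa using (hasDerivAt_id x).const_mul (ε/2)
          exact ((hderg x hx0).add hlin).differentiableAt.differentiableWithinAt
        · intro x hx
          rw [interior_Icc] at hx
          have hx0 : (0:ℝ) < x := lt_trans zero_lt_one hx.1
          have hlin : HasDerivAt (fun t : ℝ => ε/2 * t) (ε/2) x := by
            simpa using (hasDerivAt_id x).const_mul (ε/2)
          rw [show (fun t => g t + ε/2 * t) = g + (fun t => ε/2 * t) from rfl, ((hderg x hx0).add hlin).deriv]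
          have h2 := hgd_eq x hx0
          have h3 := h1 x hx.1.le
          have h4 := hcon x hx0.le
          linarith
      have hmem1 : (1:ℝ) ∈ Icc 1 T := left_mem_Icc.2 hT1
      have hmemT : T ∈ Icc 1 T := right_mem_Icc.2 hT1
      have hle := hanti hmem1 hmemT hT1
      have hTbig : 2 * g 1 / ε + 2 ≤ T := le_max_right _ _
      have hεT : g 1 + ε ≤ ε/2 * T := by
        have h5 : ε/2 * (2 * g 1 / ε + 2) ≤ ε/2 * T :=
          mul_le_mul_of_nonneg_left hTbig (by linarith)
        calc g 1 + ε = ε/2 * (2 * g 1 / ε + 2) := by field_simp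
          _ ≤ ε/2 * T := h5
      have hgT : g T ≤ -(ε/2) := by
        simp only at hle
        linarith
      exact absurd hgT (not_le.2 (h1 T hT1))
    obtain ⟨s0, hs01, hgs0⟩ := step1
    have hs00 : (0:ℝ) < s0 := lt_of_lt_of_le zero_lt_one hs01
    have step2 : ∀ s, s0 ≤ s → g s ≤ -(ε/2) := by
      intro s1 hs1
      by_contra h2
      push_neg at h2
      have hs0s1 : s0 < s1 := by
        rcases lt_or_eq_of_le hs1 with h | h
        · exact h
        · exfalso; rw [← h] at h2; linarith
      set K : Set ℝ := {t | t ∈ Icc s0 s1 ∧ g t ≤ -(ε/2)} with hK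
      have hKclosed : IsClosed K := by
        have : K = Icc s0 s1 ∩ g ⁻¹' (Iic (-(ε/2))) := rfl
        rw [this]
        exact ContinuousOn.preimage_isClosed_of_isClosed
          ((gCont hf).mono (fun x hx => le_trans hs00.le hx.1)) isClosed_Icc isClosed_Iic
      have hKcomp : IsCompact K :=
        (isCompact_Icc (a := s0) (b := s1)).of_isClosed_subset hKclosed (fun x hx => hx.1)
      have hKne : K.Nonempty := ⟨s0, left_mem_Icc.2 hs0s1.le, hgs0⟩
      set s2 : ℝ := sSup K with hs2
      have hs2K : s2 ∈ K := hKcomp.sSup_mem hKne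
      have hs2lt : s2 < s1 := by
        rcases lt_or_eq_of_le hs2K.1.2 with h | h
        · exact h
        · exfalso; rw [h] at hs2K; linarith [hs2K.2]
      have hmid : ∀ t, s2 < t → t ≤ s1 → -(ε/2) < g t := by
        intro t ht hts1
        by_contra h3
        push_neg at h3
        have : t ∈ K := ⟨⟨le_trans hs2K.1.1 ht.le, hts1⟩, h3⟩
        exact absurd (le_csSup hKcomp.bddAbove this) (not_le.2 ht)
      have hanti : AntitoneOn g (Icc s2 s1) := by
        apply antitoneOn_of_deriv_nonpos (convex_Icc s2 s1)
        · exact (gCont hf).mono (fun x hx => le_trans (le_trans hs00.le hs2K.1.1) hx.1)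
        · intro x hx
          rw [interior_Icc] at hx
          have hx0 : (0:ℝ) < x := lt_of_le_of_lt (le_trans hs00.le hs2K.1.1) hx.1
          exact (hderg x hx0).differentiableAt.differentiableWithinAt
        · intro x hx
          rw [interior_Icc] at hx
          have hx0 : (0:ℝ) < x := lt_of_le_of_lt (le_trans hs00.le hs2K.1.1) hx.1
          rw [(hderg x hx0).deriv]
          have h4 := hgd_eq x hx0
          have h5 := hmid x hx.1 hx.2.le
          have h6 := hcon x hx0.le
          linarith
      have := hanti (left_mem_Icc.2 hs2lt.le) (right_mem_Icc.2 hs2lt.le) hs2lt.le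
      linarith [hs2K.2]
    set c : ℝ := (ε/2) ^ ((p-1)⁻¹) with hc
    have hcpos : 0 < c := Real.rpow_pos_of_pos (by linarith) _
    have hfdle : ∀ s, s0 ≤ s → fd s ≤ -c := by
      intro s hs
      have hspos : 0 < s := lt_of_lt_of_le hs00 hs
      have h1 : ε/2 ≤ |fd s| ^ (p-1) := by
        have h0 := step2 s hs
        have h2 := hgid s hspos
        linarith
      have h2 : c ≤ |fd s| := by
        have h3 : (ε/2) ^ ((p-1)⁻¹) ≤ (|fd s| ^ (p-1)) ^ ((p-1)⁻¹) :=
          Real.rpow_le_rpow (by linarith) h1 (by positivity)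
        rwa [Real.rpow_rpow_inv (abs_nonneg _) (ne_of_gt hp1')] at h3
      have h4 : |fd s| = -fd s := abs_of_neg (hfd s hspos)
      linarith [h2.trans_eq h4]
    set T : ℝ := s0 + f s0 / c + 1 with hT
    have hTs0 : s0 < T := by
      have h0 : 0 < f s0 / c := div_pos (hfpos s0 hs00.le) hcpos
      rw [hT]
      linarith
    have hanti : AntitoneOn (fun t => f t + c * t) (Icc s0 T) := by
      apply antitoneOn_of_deriv_nonpos (convex_Icc s0 T)
      · apply ContinuousOn.add
        · exact (fCont hf).mono (fun x hx => le_trans hs00.le hx.1)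
        · exact (continuous_const.mul continuous_id).continuousOn
      · intro x hx
        rw [interior_Icc] at hx
        have hx0 : (0:ℝ) < x := hs00.trans hx.1
        have hlin : HasDerivAt (fun t : ℝ => c * t) c x := by
          simpa using (hasDerivAt_id x).const_mul c
        exact ((hderf x hx0).add hlin).differentiableAt.differentiableWithinAt
      · intro x hx
        rw [interior_Icc] at hx
        have hx0 : (0:ℝ) < x := hs00.trans hx.1
        have hlin : HasDerivAt (fun t : ℝ => c * t) c x := by
          simpa using (hasDerivAt_id x).const_mul c
        rw [show (fun t => f t + c * t) = f + (fun t => c * t) from rfl, ((hderf x hx0).add hlin).deriv]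
        have := hfdle x hx.1.le
        linarith
    have h5 := hanti (left_mem_Icc.2 hTs0.le) (right_mem_Icc.2 hTs0.le) hTs0.le
    simp only at h5
    have h6 : f T ≤ f s0 - c * (T - s0) := by linarith
    have h7 : c * (T - s0) = f s0 + c := by
      rw [hT]
      field_simp
      ring
    have h8 : f T ≤ -c := by rw [h7] at h6; linarith
    have := hfpos T (by linarith)
    linarith
  have hanti : StrictAntiOn f (Ici 0) := by
    apply strictAntiOn_of_deriv_neg (convex_Ici 0) (fCont hf)
    intro x hx
    rw [interior_Ici] at hx
    rw [(hderf x hx).deriv]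
    exact hfd x hx
  rw [tendsto_order]
  constructor
  · intro b hb
    filter_upwards [eventually_ge_atTop (0:ℝ)] with r hr
    exact lt_trans hb (hfpos r hr)
  · intro b hb
    obtain ⟨r, hr0, hrb⟩ := claim b hb
    filter_upwards [eventually_gt_atTop r] with s hs
    exact lt_trans (hanti (mem_Ici.2 hr0) (mem_Ici.2 (le_trans hr0 hs.le)) hs) hrb

lemma delta_pos {p a y0 X F : ℝ} (hp1' : 0 < p - 1) (hp0 : 0 < p) (ha : 0 < a) (hy01 : y0 < 1)
    (hX : 0 ≤ X) (hF : F = a * (1 - y0))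
    (h : (p-1) ^ (-p) < X ^ p / a ^ p * (1-y0) ^ (-p)) :
    0 < X - F / (p-1) := by
  have hy : (0:ℝ) < 1 - y0 := by linarith
  have hA : (0:ℝ) < a ^ p := Real.rpow_pos_of_pos ha p
  have hB : (0:ℝ) < (1-y0) ^ p := Real.rpow_pos_of_pos hy p
  have hC : (0:ℝ) < (p-1) ^ p := Real.rpow_pos_of_pos hp1' p
  rw [Real.rpow_neg hp1'.le, Real.rpow_neg hy.le, ← div_eq_mul_inv, div_div,
    inv_eq_one_div, div_lt_div_iff₀ hC (mul_pos hA hB)] at h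
  have key : F < (p-1) * X := by
    by_contra hcon
    push_neg at hcon
    have h5 : ((p-1) * X) ^ p ≤ F ^ p :=
      Real.rpow_le_rpow (mul_nonneg hp1'.le hX) hcon hp0.le
    rw [Real.mul_rpow hp1'.le hX, hF, Real.mul_rpow ha.le hy.le] at h5
    nlinarith
  have : F / (p-1) < X := (div_lt_iff₀ hp1').2 (by linarith)
  linarith

lemma bound_at {ψ : ℝ → ℝ} (hp : p ∈ Set.Ioo (1:ℝ) 2) (ha : 0 < a)
    (hf : IsSol p a f fd gd) (hrel : PsiRel p a f fd ψ)
    {r0 r δ : ℝ} (h00 : 0 ≤ r0) (hr : r0 < r)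
    (hfp : ∀ s, 0 ≤ s → s ≤ r → 0 < f s) (hext : (r : EReal) < extTime f)
    (hδ0 : 0 ≤ δ) (hδ : δ ≤ |fd r0| - f r0 / (p-1)) :
    δ ^ p / a ^ p ≤ ψ (1 - f r / a) := by
  have hp1' : (0:ℝ) < p - 1 := by linarith [hp.1]
  have hp0 : (0:ℝ) < p := by linarith [hp.1]
  have h1 := G_mono hp ha hf h00 hr hfp
  have h3 : 0 < f r := hfp r (le_trans h00 hr.le) le_rfl
  have h4 : 0 < f r / (p-1) := div_pos h3 hp1'
  have h2 : δ ≤ |fd r| := by linarith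
  have h5 : δ ^ p ≤ |fd r| ^ p := Real.rpow_le_rpow hδ0 h2 hp0.le
  rw [hrel r (le_trans h00 hr.le) hext]
  have hA : (0:ℝ) < a ^ p := Real.rpow_pos_of_pos ha p
  exact (div_le_div_iff_of_pos_right hA).2 h5

end Stmt9Aux

open Stmt9Aux in
/-- With `ℓ(a) := lim_{y→1} ψ(y,a)` and `κ := (p-1)^{-p}`, one has
`ℓ(a) > 0` if and only if `sup_{y ∈ [0,1)} ψ(y,a)(1-y)^{-p} > κ` (i.e. some value of
`ψ(y,a)(1-y)^{-p}` exceeds `κ`). -/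
theorem stmt9 (p a : ℝ) (hp : p ∈ Set.Ioo (1:ℝ) 2) (ha : 0 < a)
    (f fd gd ψ : ℝ → ℝ) (hf : IsSol p a f fd gd) (hrel : PsiRel p a f fd ψ)
    (ℓ : ℝ) (hl : Tendsto ψ (𝓝[<] (1:ℝ)) (𝓝 ℓ)) :
    0 < ℓ ↔ ∃ y ∈ Set.Ico (0:ℝ) 1, (p-1) ^ (-p) < ψ y * (1-y) ^ (-p) := by
  obtain ⟨hp1, hp2⟩ := hp
  have hpIoo : p ∈ Set.Ioo (1:ℝ) 2 := ⟨hp1, hp2⟩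
  have hp1' : (0:ℝ) < p - 1 := by linarith
  have hp0 : (0:ℝ) < p := by linarith
  have hf0 : f 0 = a := hf.2.2.2.2.2.1
  constructor
  · -- easy direction
    intro hℓ
    have h1 : ∀ᶠ y in 𝓝[<] (1:ℝ), ℓ/2 < ψ y := hl.eventually_const_lt (by linarith)
    have h2 : Tendsto (fun y : ℝ => (p-1) ^ (-p) * (1-y) ^ p) (𝓝[<] (1:ℝ)) (𝓝 0) := by
      have ha1 : Tendsto (fun y : ℝ => 1 - y) (𝓝[<] (1:ℝ)) (𝓝 0) := by
        have h : Tendsto (fun y : ℝ => 1 - y) (𝓝 (1:ℝ)) (𝓝 ((1:ℝ) - 1)) :=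
          (tendsto_id (x := 𝓝 (1:ℝ))).const_sub 1
        norm_num at h
        exact h.mono_left nhdsWithin_le_nhds
      have hc : ContinuousAt (fun x : ℝ => x ^ p) 0 :=
        Real.continuousAt_rpow_const 0 p (Or.inr hp0.le)
      have h := hc.tendsto.comp ha1
      rw [Real.zero_rpow (ne_of_gt hp0)] at h
      have := h.const_mul ((p-1) ^ (-p))
      simpa using this
    have h3 : ∀ᶠ y in 𝓝[<] (1:ℝ), (p-1) ^ (-p) * (1-y) ^ p < ℓ/2 :=
      h2.eventually_lt_const (by linarith)
    have h4 : ∀ᶠ y in 𝓝[<] (1:ℝ), y ∈ Set.Ioo (0:ℝ) 1 :=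
      eventually_of_mem (Ioo_mem_nhdsLT_of_mem (by norm_num : (1:ℝ) ∈ Ioc (0:ℝ) 1))
        (fun _ h => h)
    obtain ⟨y, hy1, hy3, hy4⟩ := (h1.and (h3.and h4)).exists
    refine ⟨y, ⟨hy4.1.le, hy4.2⟩, ?_⟩
    have hy1' : (0:ℝ) < 1 - y := by linarith [hy4.2]
    have hpow : (0:ℝ) < (1-y) ^ p := Real.rpow_pos_of_pos hy1' _
    rw [Real.rpow_neg hy1'.le, ← div_eq_mul_inv, lt_div_iff₀ hpow]
    calc (p-1) ^ (-p) * (1-y) ^ p < ℓ/2 := hy3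
      _ < ψ y := hy1
  · -- hard direction
    rintro ⟨y0, ⟨hy00, hy01⟩, hcond⟩
    have hy0' : (0:ℝ) < 1 - y0 := by linarith
    have hb_pos : 0 < a * (1 - y0) := mul_pos ha hy0'
    have hb_le : a * (1 - y0) ≤ a := by nlinarith
    by_cases hZ : ∃ r : ℝ, 0 < r ∧ f r = 0
    · -- finite extinction time
      set Z : Set ℝ := {r | 0 < r ∧ f r = 0} with hZdef
      have hZne : Z.Nonempty := hZ
      have hZbdd : BddBelow Z := ⟨0, fun z hz => hz.1.le⟩
      set R : ℝ := sInf Z with hRdef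
      have hR0 : 0 ≤ R := le_csInf hZne (fun z hz => hz.1.le)
      have hfR : f R = 0 := by
        have h1 : R ∈ closure Z := csInf_mem_closure hZne hZbdd
        have h2 : Z ⊆ Ici 0 ∩ f ⁻¹' {0} := fun z hz => ⟨hz.1.le, hz.2⟩
        have h3 : IsClosed (Ici 0 ∩ f ⁻¹' {0}) :=
          ContinuousOn.preimage_isClosed_of_isClosed (fCont hf) isClosed_Ici
            isClosed_singleton
        exact ((closure_minimal h2 h3) h1).2
      have hfnear : ∃ u > (0:ℝ), ∀ s, 0 ≤ s → s ≤ u → 0 < f s := by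
        have hc : ContinuousWithinAt f (Ici 0) 0 := fCont hf 0 (mem_Ici.2 le_rfl)
        have hev : ∀ᶠ s in 𝓝[≥] (0:ℝ), 0 < f s := by
          have hmem : Ioi (0:ℝ) ∈ 𝓝 (f 0) := Ioi_mem_nhds (by rw [hf0]; exact ha)
          exact hc hmem
        rw [eventually_iff, mem_nhdsGE_iff_exists_Icc_subset] at hev
        obtain ⟨u, hu, hsub⟩ := hev
        exact ⟨u, hu, fun s h1 h2 => hsub ⟨h1, h2⟩⟩
      obtain ⟨u, hu, hupos⟩ := hfnear
      have hRpos : 0 < R := by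
        have hle : u ≤ R := le_csInf hZne (fun z hz => by
          by_contra h
          push_neg at h
          exact absurd hz.2 (ne_of_gt (hupos z hz.1.le h.le)))
        linarith
      have hfpos : ∀ s, 0 ≤ s → s < R → 0 < f s := by
        intro s hs hsR
        by_contra h
        push_neg at h
        rcases eq_or_lt_of_le h with h' | h'
        · have hs0 : 0 < s := by
            rcases eq_or_lt_of_le hs with h'' | h''
            · exfalso; rw [← h''] at h'; rw [hf0] at h'; linarith
            · exact h''
          have : s ∈ Z := ⟨hs0, h'⟩
          exact absurd (csInf_le hZbdd this) (not_le.2 hsR)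
        · have hcont : ContinuousOn f (Icc 0 s) := (fCont hf).mono (fun x hx => hx.1)
          have hmem : (0:ℝ) ∈ Icc (f s) (f 0) := ⟨h'.le, by rw [hf0]; exact ha.le⟩
          obtain ⟨t, ht, hft⟩ := intermediate_value_Icc' hs hcont hmem
          have ht0 : 0 < t := by
            rcases eq_or_lt_of_le ht.1 with h'' | h''
            · exfalso; rw [← h''] at hft; rw [hf0] at hft; linarith
            · exact h''
          have : t ∈ Z := ⟨ht0, hft⟩
          have := csInf_le hZbdd this
          linarith [ht.2]
      have hext : extTime f = (R : EReal) := by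
        apply le_antisymm
        · exact sInf_le ⟨R, hRpos, hfR, rfl⟩
        · apply le_sInf
          rintro x ⟨r, hr, hfr, rfl⟩
          have : r ∈ Z := ⟨hr, hfr⟩
          exact EReal.coe_le_coe_iff.2 (csInf_le hZbdd this)
      -- find r0 via IVT
      have hcontR : ContinuousOn f (Icc 0 R) := (fCont hf).mono (fun x hx => hx.1)
      have hbmem : a * (1 - y0) ∈ Icc (f R) (f 0) := by
        rw [hfR, hf0]
        exact ⟨hb_pos.le, hb_le⟩
      obtain ⟨r0, hr0mem, hfr0⟩ := intermediate_value_Icc' hR0 hcontR hbmem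
      have hfr0pos : 0 < f r0 := by rw [hfr0]; exact hb_pos
      have hr0R : r0 < R := by
        rcases eq_or_lt_of_le hr0mem.2 with h | h
        · exfalso; rw [h, hfR] at hfr0; linarith
        · exact h
      have hy0eq : 1 - f r0 / a = y0 := by
        rw [hfr0]
        field_simp; ring
      have hψy0 : ψ y0 = |fd r0| ^ p / a ^ p := by
        rw [← hy0eq]
        exact hrel r0 hr0mem.1 (by rw [hext]; exact_mod_cast hr0R)
      rw [hψy0] at hcond
      set δ : ℝ := |fd r0| - f r0 / (p-1) with hδdef
      have hδpos : 0 < δ :=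
        delta_pos hp1' hp0 ha hy01 (abs_nonneg _) hfr0 hcond
      set c : ℝ := δ ^ p / a ^ p with hcdef
      have hcpos : 0 < c :=
        div_pos (Real.rpow_pos_of_pos hδpos p) (Real.rpow_pos_of_pos ha p)
      -- the filter
      have hNB : (𝓝[Ico 0 R] R).NeBot := by
        rw [← mem_closure_iff_nhdsWithin_neBot, closure_Ico (ne_of_lt hRpos)]
        exact right_mem_Icc.2 hR0
      have hfRlim : Tendsto f (𝓝[Ico 0 R] R) (𝓝 0) := by
        have h : Tendsto f (𝓝[Ico 0 R] R) (𝓝 (f R)) :=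
          (fCont hf R (mem_Ici.2 hR0)).mono (fun x (hx : x ∈ Ico 0 R) => hx.1)
        rwa [hfR] at h
      have hY : Tendsto (fun r => 1 - f r / a) (𝓝[Ico 0 R] R) (𝓝[<] (1:ℝ)) := by
        rw [tendsto_nhdsWithin_iff]
        constructor
        · have h := (hfRlim.div_const a).const_sub 1
          simpa using h
        · filter_upwards [self_mem_nhdsWithin] with r hr
          have h1 := hfpos r hr.1 hr.2
          have h2 : 0 < f r / a := div_pos h1 ha
          simp only [mem_Iio]
          linarith
      have hEv : ∀ᶠ r in 𝓝[Ico 0 R] R, c ≤ ψ (1 - f r / a) := by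
        have hIoo : Ico 0 R ∩ Ioi r0 ∈ 𝓝[Ico 0 R] R :=
          inter_mem_nhdsWithin _ (Ioi_mem_nhds hr0R)
        filter_upwards [hIoo] with r hr
        exact bound_at hpIoo ha hf hrel hr0mem.1 hr.2
          (fun s hs hsr => hfpos s hs (lt_of_le_of_lt hsr hr.1.2))
          (by rw [hext]; exact_mod_cast hr.1.2) hδpos.le le_rfl
      have : c ≤ ℓ := ge_of_tendsto (hl.comp hY) hEv
      linarith
    · -- no extinction
      push_neg at hZ
      have hfpos : ∀ s, 0 ≤ s → 0 < f s := by
        intro s hs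
        rcases eq_or_lt_of_le hs with h | h
        · rw [← h, hf0]; exact ha
        · by_contra hc
          push_neg at hc
          rcases eq_or_lt_of_le hc with h' | h'
          · exact hZ s h h'
          · have hcont : ContinuousOn f (Icc 0 s) := (fCont hf).mono (fun x hx => hx.1)
            have hmem : (0:ℝ) ∈ Icc (f s) (f 0) := ⟨h'.le, by rw [hf0]; exact ha.le⟩
            obtain ⟨t, ht, hft⟩ := intermediate_value_Icc' h.le hcont hmem
            have ht0 : 0 < t := by
              rcases eq_or_lt_of_le ht.1 with h'' | h''
              · exfalso; rw [← h''] at hft; rw [hf0] at hft; linarith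
              · exact h''
            exact hZ t ht0 hft
      have hext : ∀ r : ℝ, (r : EReal) < extTime f := by
        intro r
        have hempty : {x : EReal | ∃ r : ℝ, 0 < r ∧ f r = 0 ∧ x = (r : EReal)} = ∅ := by
          rw [eq_empty_iff_forall_notMem]
          rintro x ⟨s, hs, hfs, rfl⟩
          exact hZ s hs hfs
        rw [extTime, hempty, sInf_empty]
        exact EReal.coe_lt_top r
      have hdecay := decay hpIoo ha hf hfpos
      -- find r0 via IVT
      obtain ⟨T, hT0, hTlt⟩ : ∃ T, 0 ≤ T ∧ f T < a * (1 - y0) := by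
        have h1 : ∀ᶠ r in atTop, f r < a * (1 - y0) := hdecay.eventually_lt_const hb_pos
        have h2 : ∀ᶠ r : ℝ in atTop, 0 ≤ r := eventually_ge_atTop 0
        obtain ⟨T, hT1, hT2⟩ := (h2.and h1).exists
        exact ⟨T, hT1, hT2⟩
      have hcontT : ContinuousOn f (Icc 0 T) := (fCont hf).mono (fun x hx => hx.1)
      have hbmem : a * (1 - y0) ∈ Icc (f T) (f 0) := by
        rw [hf0]
        exact ⟨hTlt.le, hb_le⟩
      obtain ⟨r0, hr0mem, hfr0⟩ := intermediate_value_Icc' hT0 hcontT hbmem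
      have hy0eq : 1 - f r0 / a = y0 := by
        rw [hfr0]
        field_simp; ring
      have hψy0 : ψ y0 = |fd r0| ^ p / a ^ p := by
        rw [← hy0eq]
        exact hrel r0 hr0mem.1 (hext r0)
      rw [hψy0] at hcond
      set δ : ℝ := |fd r0| - f r0 / (p-1) with hδdef
      have hδpos : 0 < δ :=
        delta_pos hp1' hp0 ha hy01 (abs_nonneg _) hfr0 hcond
      set c : ℝ := δ ^ p / a ^ p with hcdef
      have hcpos : 0 < c :=
        div_pos (Real.rpow_pos_of_pos hδpos p) (Real.rpow_pos_of_pos ha p)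
      have hY : Tendsto (fun r => 1 - f r / a) atTop (𝓝[<] (1:ℝ)) := by
        rw [tendsto_nhdsWithin_iff]
        constructor
        · have h := (hdecay.div_const a).const_sub 1
          simpa using h
        · filter_upwards [eventually_ge_atTop (0:ℝ)] with r hr
          have h1 := hfpos r hr
          have h2 : 0 < f r / a := div_pos h1 ha
          simp only [mem_Iio]
          linarith
      have hEv : ∀ᶠ r in atTop, c ≤ ψ (1 - f r / a) := by
        filter_upwards [eventually_gt_atTop r0] with r hr
        exact bound_at hpIoo ha hf hrel hr0mem.1 hr
          (fun s hs _ => hfpos s hs) (hext r) hδpos.le le_rfl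
      have : c ≤ ℓ := ge_of_tendsto (hl.comp hY) hEv
      linarith
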